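/- Let s > 0 and let S be a nonempty finite set of points of the square lattice L_s = {(s·(p + 1/2), s·(q + 1/2)) : p, q ∈ ℤ} ⊆ ℝ². Then there exist x, y ∈ S with Euclidean distance dist(x, y) ≥ s·(√|S| − 1). -/

import Mathlib

open MeasureTheory Metric Set ENNReal

noncomputable section

/-- The plane `ℝ²` with the Euclidean metric. -/
abbrev Plane := EuclideanSpace ℝ (Fin 2)

/-- The square lattice of spacing `s`, offset by half a spacing in each coordinate:
`L_s = {(s(p + 1/2), s(q + 1/2)) : p, q ∈ ℤ}`. -/
def latticePts (s : ℝ) : Set Plane :=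
  {x | ∃ p q : ℤ, x 0 = s * ((p : ℝ) + 1 / 2) ∧ x 1 = s * ((q : ℝ) + 1 / 2)}

/-- Each coordinate difference is bounded by the Euclidean distance. -/
lemma coord_le_dist (z w : Plane) (i : Fin 2) : |z i - w i| ≤ dist z w := by
  rw [EuclideanSpace.dist_eq]
  have h1 : |z i - w i| = Real.sqrt ((z i - w i) ^ 2) := (Real.sqrt_sq_eq_abs _).symm
  rw [h1]
  apply Real.sqrt_le_sqrt
  have := Finset.single_le_sum (f := fun j => dist (z j) (w j) ^ 2)
    (fun j _ => sq_nonneg _) (Finset.mem_univ i)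
  simpa [Real.dist_eq, sq_abs] using this

/-- **Lattice diameter estimate.** A nonempty finite set `S` of points of the square
lattice of spacing `s > 0` contains two points at Euclidean distance at least
`s·(√|S| - 1)`. -/
theorem lattice_diameter (s : ℝ) (hs : 0 < s) (S : Set Plane) (hfin : S.Finite)
    (hne : S.Nonempty) (hsub : S ⊆ latticePts s) :
    ∃ x ∈ S, ∃ y ∈ S, s * (Real.sqrt (S.ncard : ℝ) - 1) ≤ dist x y := by
  classical
  set T : Finset Plane := hfin.toFinset with hT
  have hTmem : ∀ z, z ∈ T ↔ z ∈ S := fun z => hfin.mem_toFinset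
  have hTne : T.Nonempty := by
    obtain ⟨z, hz⟩ := hne
    exact ⟨z, (hTmem z).2 hz⟩
  -- pick a diameter-realizing pair
  obtain ⟨⟨x, y⟩, hxyT, hmax⟩ := (T ×ˢ T).exists_max_image
    (fun p => dist p.1 p.2) (hTne.product hTne)
  rw [Finset.mem_product] at hxyT
  set D := dist x y with hD
  have hD0 : 0 ≤ D := dist_nonneg
  -- integer coordinates
  set f : Plane → ℤ × ℤ := fun z => (⌊z 0 / s⌋, ⌊z 1 / s⌋) with hf
  have hfv : ∀ z ∈ S, ∀ p q : ℤ, z 0 = s * ((p : ℝ) + 1 / 2) →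
      z 1 = s * ((q : ℝ) + 1 / 2) → f z = (p, q) := by
    intro z hz p q h0 h1
    have e0 : z 0 / s = (p : ℝ) + 1 / 2 := by rw [h0]; field_simp
    have e1 : z 1 / s = (q : ℝ) + 1 / 2 := by rw [h1]; field_simp
    simp only [hf, e0, e1, Prod.mk.injEq]
    constructor <;>
    · rw [add_comm, Int.floor_add_intCast]; norm_num
  have hinj : ∀ z ∈ S, ∀ w ∈ S, f z = f w → z = w := by
    intro z hz w hw hzw
    obtain ⟨p, q, h0, h1⟩ := hsub hz
    obtain ⟨p', q', h0', h1'⟩ := hsub hw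
    rw [hfv z hz p q h0 h1, hfv w hw p' q' h0' h1'] at hzw
    have hp : p = p' := by have := congrArg Prod.fst hzw; simpa using this
    have hq : q = q' := by have := congrArg Prod.snd hzw; simpa using this
    ext i
    fin_cases i
    · show z 0 = w 0
      rw [h0, h0', hp]
    · show z 1 = w 1
      rw [h1, h1', hq]
  -- coordinate differences bounded
  have key : ∀ i : Fin 2, ∀ z ∈ S, ∀ w ∈ S,
      ((f z).1 - (f w).1 : ℤ) ≤ ⌊D / s⌋ ∧ ((f z).2 - (f w).2 : ℤ) ≤ ⌊D / s⌋ := by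
    intro i z hz w hw
    obtain ⟨p, q, h0, h1⟩ := hsub hz
    obtain ⟨p', q', h0', h1'⟩ := hsub hw
    have hzD : dist z w ≤ D := by
      have := hmax (z, w) (Finset.mem_product.2 ⟨(hTmem z).2 hz, (hTmem w).2 hw⟩)
      simpa using this
    have hb : ∀ j : Fin 2, |z j - w j| ≤ D := fun j => (coord_le_dist z w j).trans hzD
    rw [hfv z hz p q h0 h1, hfv w hw p' q' h0' h1']
    constructor
    · rw [Int.le_floor]
      have h := hb 0
      rw [h0, h0'] at h
      have : s * ((p : ℝ) - p') ≤ D := by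
        have he : s * ((p : ℝ) + 1/2) - s * ((p' : ℝ) + 1/2) = s * ((p : ℝ) - p') := by ring
        rw [he] at h
        exact (le_abs_self _).trans h
      push_cast
      rw [le_div_iff₀ hs]
      nlinarith [this]
    · rw [Int.le_floor]
      have h := hb 1
      rw [h1, h1'] at h
      have : s * ((q : ℝ) - q') ≤ D := by
        have he : s * ((q : ℝ) + 1/2) - s * ((q' : ℝ) + 1/2) = s * ((q : ℝ) - q') := by ring
        rw [he] at h
        exact (le_abs_self _).trans h
      push_cast
      rw [le_div_iff₀ hs]
      nlinarith [this]
  set k : ℤ := ⌊D / s⌋ with hk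
  have hk0 : 0 ≤ k := Int.floor_nonneg.2 (div_nonneg hD0 hs.le)
  -- min coordinates
  have hPne : (T.image fun z => (f z).1).Nonempty := hTne.image _
  have hQne : (T.image fun z => (f z).2).Nonempty := hTne.image _
  set pmin := (T.image fun z => (f z).1).min' hPne with hpmin
  set qmin := (T.image fun z => (f z).2).min' hQne with hqmin
  obtain ⟨zp, hzpT, hzp⟩ := Finset.mem_image.1 ((T.image fun z => (f z).1).min'_mem hPne)
  obtain ⟨zq, hzqT, hzq⟩ := Finset.mem_image.1 ((T.image fun z => (f z).2).min'_mem hQne)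
  -- injective map into a box
  have hcard : T.card ≤ ((Finset.Icc pmin (pmin + k)) ×ˢ (Finset.Icc qmin (qmin + k))).card := by
    apply Finset.card_le_card_of_injOn f
    · intro z hzT
      have hzS := (hTmem z).1 hzT
      rw [Finset.mem_coe, Finset.mem_product, Finset.mem_Icc, Finset.mem_Icc]
      refine ⟨⟨?_, ?_⟩, ?_, ?_⟩
      · exact hpmin ▸ Finset.min'_le _ _ (Finset.mem_image_of_mem _ hzT)
      · have := (key 0 z hzS zp ((hTmem zp).1 hzpT)).1
        rw [hzp] at this; omega
      · exact hqmin ▸ Finset.min'_le _ _ (Finset.mem_image_of_mem _ hzT)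
      · have := (key 0 z hzS zq ((hTmem zq).1 hzqT)).2
        rw [hzq] at this; omega
    · intro z hz w hw h
      exact hinj z ((hTmem z).1 hz) w ((hTmem w).1 hw) h
  have hbox : ((Finset.Icc pmin (pmin + k)) ×ˢ (Finset.Icc qmin (qmin + k))).card
      = (k + 1).toNat * (k + 1).toNat := by
    rw [Finset.card_product, Int.card_Icc, Int.card_Icc]
    congr 1 <;> omega
  have hncard : S.ncard = T.card := Set.ncard_eq_toFinset_card S hfin
  -- real arithmetic
  have hn : (S.ncard : ℝ) ≤ ((k : ℝ) + 1) ^ 2 := by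
    have h1 : (T.card : ℝ) ≤ ((k + 1).toNat : ℝ) * ((k + 1).toNat : ℝ) := by
      exact_mod_cast hbox ▸ hcard
    have h2 : ((k + 1).toNat : ℝ) = (k : ℝ) + 1 := by
      have : ((k + 1).toNat : ℤ) = k + 1 := Int.toNat_of_nonneg (by omega)
      exact_mod_cast this
    rw [hncard]
    rw [h2] at h1; nlinarith [h1]
  have hkD : (k : ℝ) ≤ D / s := Int.floor_le _
  have hsqrt : Real.sqrt (S.ncard : ℝ) ≤ D / s + 1 := by
    have hk0' : (0 : ℝ) ≤ (k : ℝ) := by exact_mod_cast hk0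
    have h1 : (S.ncard : ℝ) ≤ (D / s + 1) ^ 2 :=
      hn.trans (pow_le_pow_left₀ (by linarith) (by linarith) 2)
    calc Real.sqrt (S.ncard : ℝ) ≤ Real.sqrt ((D / s + 1) ^ 2) := Real.sqrt_le_sqrt h1
      _ = D / s + 1 := Real.sqrt_sq (by positivity)
  refine ⟨x, (hTmem x).1 hxyT.1, y, (hTmem y).1 hxyT.2, ?_⟩
  rw [← hD]
  have := mul_le_mul_of_nonneg_left hsqrt hs.le
  rw [mul_add, mul_div_cancel₀ _ hs.ne'] at this
  linarith
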